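/- For the 9×9 braid matrix R̂(θ) of the N = 3 case, the constant matrix H := (d/dθ)R̂(θ)|_{θ=0} (equivalently H = Σ_{α≠(22)} m_α P_α in the projector basis) satisfies the double-commutator equation [[H₁₂, H₂₃], H₁₂] = [[H₂₃, H₁₂], H₂₃], where H₁₂ = H⊗I₃ and H₂₃ = I₃⊗H. -/

import Mathlib

open Matrix Kronecker

/-- The 9×9 braid matrix `R̂(θ)` of the `N = 3` case, written on the index set
`Fin 3 × Fin 3` (0-based pairs, ordered lexicographically as the rows/columns of
the 9×9 matrix).  Its nonzero entries sit on the diagonal and the antidiagonal: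
`a₊,b₊,a₊,c₊,1,c₊,a₊,b₊,a₊` on the diagonal and `a₋,b₋,a₋,c₋,·,c₋,a₋,b₋,a₋` on
the antidiagonal, where
`a_±(θ) = (e^{m₁₁⁺θ} ± e^{m₁₁⁻θ})/2`, `b_±(θ) = (e^{m₁₂⁺θ} ± e^{m₁₂⁻θ})/2`,
`c_±(θ) = (e^{m₂₁⁺θ} ± e^{m₂₁⁻θ})/2`. -/
noncomputable def Rhat (m11p m11m m12p m12m m21p m21m : ℝ) (θ : ℝ) :
    Matrix (Fin 3 × Fin 3) (Fin 3 × Fin 3) ℝ :=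
  let aP : ℝ := (Real.exp (m11p*θ) + Real.exp (m11m*θ))/2
  let aM : ℝ := (Real.exp (m11p*θ) - Real.exp (m11m*θ))/2
  let bP : ℝ := (Real.exp (m12p*θ) + Real.exp (m12m*θ))/2
  let bM : ℝ := (Real.exp (m12p*θ) - Real.exp (m12m*θ))/2
  let cP : ℝ := (Real.exp (m21p*θ) + Real.exp (m21m*θ))/2
  let cM : ℝ := (Real.exp (m21p*θ) - Real.exp (m21m*θ))/2
  fun x y =>
    if y = x then
      (if x = ((1, 1) : Fin 3 × Fin 3) then 1
       else if x.1 = 1 then cP else if x.2 = 1 then bP else aP)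
    else if y = (2 - x.1, 2 - x.2) then
      (if x.1 = 1 then cM else if x.2 = 1 then bM else aM)
    else 0

/-- `H := (d/dθ) R̂(θ) |_{θ=0}` (entrywise derivative at 0). -/
noncomputable def Hmat (m11p m11m m12p m12m m21p m21m : ℝ) :
    Matrix (Fin 3 × Fin 3) (Fin 3 × Fin 3) ℝ :=
  fun x y => deriv (fun θ => Rhat m11p m11m m12p m12m m21p m21m θ x y) 0

/-- `H₁₂ = H ⊗ I₃` as a 27×27 matrix. -/
noncomputable def Hmat12 (m11p m11m m12p m12m m21p m21m : ℝ) :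
    Matrix (Fin 3 × Fin 3 × Fin 3) (Fin 3 × Fin 3 × Fin 3) ℝ :=
  Matrix.reindex (Equiv.prodAssoc _ _ _) (Equiv.prodAssoc _ _ _)
    (Hmat m11p m11m m12p m12m m21p m21m ⊗ₖ (1 : Matrix (Fin 3) (Fin 3) ℝ))

/-- `H₂₃ = I₃ ⊗ H` as a 27×27 matrix. -/
noncomputable def Hmat23 (m11p m11m m12p m12m m21p m21m : ℝ) :
    Matrix (Fin 3 × Fin 3 × Fin 3) (Fin 3 × Fin 3 × Fin 3) ℝ :=
  (1 : Matrix (Fin 3) (Fin 3) ℝ) ⊗ₖ Hmat m11p m11m m12p m12m m21p m21m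

/-! ### Auxiliary machinery: generalized permutation matrices -/

/-- "Row-scaled permutation" matrix: entry `(x, y)` is `d x` if `y = σ x`, else `0`. -/
def pm {ι : Type*} [DecidableEq ι] (σ : ι → ι) (d : ι → ℝ) : Matrix ι ι ℝ :=
  Matrix.of fun x y => if y = σ x then d x else 0

lemma pm_mul {ι : Type*} [Fintype ι] [DecidableEq ι] (σ τ : ι → ι) (d e : ι → ℝ) :
    pm σ d * pm τ e = pm (fun x => τ (σ x)) (fun x => d x * e (σ x)) := by
  ext x y
  simp only [pm, Matrix.mul_apply, Matrix.of_apply, ite_mul, zero_mul, mul_ite, mul_zero]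
  rw [Finset.sum_eq_single (σ x)]
  · simp
  · intro b _ hb; simp [hb]
  · intro h; exact absurd (Finset.mem_univ _) h

/-- Diagonal coefficients of `H`. -/
noncomputable def ddH (m11p m11m m12p m12m m21p m21m : ℝ) : Fin 3 × Fin 3 → ℝ :=
  fun x => if x = (1,1) then 0 else if x.1 = 1 then (m21p+m21m)/2
    else if x.2 = 1 then (m12p+m12m)/2 else (m11p+m11m)/2

/-- Antidiagonal coefficients of `H`. -/
noncomputable def eeH (m11p m11m m12p m12m m21p m21m : ℝ) : Fin 3 × Fin 3 → ℝ :=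
  fun x => if x = (1,1) then 0 else if x.1 = 1 then (m21p-m21m)/2
    else if x.2 = 1 then (m12p-m12m)/2 else (m11p-m11m)/2

lemma dP (p q : ℝ) :
    deriv (fun θ : ℝ => Real.exp (p*θ) + Real.exp (q*θ)) 0 = p+q := by
  have h : ∀ r : ℝ, HasDerivAt (fun θ : ℝ => Real.exp (r*θ)) r 0 := by
    intro r
    have := (Real.hasDerivAt_exp (r*0)).comp 0 ((hasDerivAt_id 0).const_mul r)
    simpa [Function.comp_def] using this
  exact ((h p).add (h q)).deriv

lemma dM (p q : ℝ) :
    deriv (fun θ : ℝ => Real.exp (p*θ) - Real.exp (q*θ)) 0 = p-q := by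
  have h : ∀ r : ℝ, HasDerivAt (fun θ : ℝ => Real.exp (r*θ)) r 0 := by
    intro r
    have := (Real.hasDerivAt_exp (r*0)).comp 0 ((hasDerivAt_id 0).const_mul r)
    simpa [Function.comp_def] using this
  exact ((h p).sub (h q)).deriv

/-- The flip `x ↦ (2-x₁, 2-x₂)` of `Fin 3 × Fin 3`. -/
def flip2 : Fin 3 × Fin 3 → Fin 3 × Fin 3 := fun x => (2 - x.1, 2 - x.2)

set_option maxHeartbeats 1000000 in
lemma Hmat_pm (m11p m11m m12p m12m m21p m21m : ℝ) :
    Hmat m11p m11m m12p m12m m21p m21m =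
      pm id (ddH m11p m11m m12p m12m m21p m21m)
      + pm flip2 (eeH m11p m11m m12p m12m m21p m21m) := by
  ext x y
  fin_cases x <;> fin_cases y <;>
    simp +decide [Hmat, Rhat, pm, flip2, ddH, eeH, dP, dM, Prod.ext_iff]

/-- Flip of the first two factors of `Fin 3 × Fin 3 × Fin 3`. -/
def sg : Fin 3 × Fin 3 × Fin 3 → Fin 3 × Fin 3 × Fin 3 :=
  fun x => (2 - x.1, 2 - x.2.1, x.2.2)

/-- Flip of the last two factors of `Fin 3 × Fin 3 × Fin 3`. -/
def tg : Fin 3 × Fin 3 × Fin 3 → Fin 3 × Fin 3 × Fin 3 :=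
  fun x => (x.1, 2 - x.2.1, 2 - x.2.2)

lemma fin3_sub_sub : ∀ a : Fin 3, 2 - (2 - a) = a := by decide

@[simp] lemma sg_sg (x : Fin 3 × Fin 3 × Fin 3) : sg (sg x) = x := by
  simp [sg, fin3_sub_sub]

@[simp] lemma tg_tg (x : Fin 3 × Fin 3 × Fin 3) : tg (tg x) = x := by
  simp [tg, fin3_sub_sub]

@[simp] lemma tg_sg (x : Fin 3 × Fin 3 × Fin 3) : tg (sg x) = sg (tg x) := by
  simp [sg, tg]

lemma kron_pm (d e : Fin 3 × Fin 3 → ℝ) :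
    Matrix.reindex (Equiv.prodAssoc _ _ _) (Equiv.prodAssoc _ _ _)
      ((pm id d + pm flip2 e) ⊗ₖ (1 : Matrix (Fin 3) (Fin 3) ℝ)) =
    pm id (fun x : Fin 3 × Fin 3 × Fin 3 => d (x.1, x.2.1))
      + pm sg (fun x : Fin 3 × Fin 3 × Fin 3 => e (x.1, x.2.1)) := by
  ext ⟨x1, x2, x3⟩ ⟨y1, y2, y3⟩
  simp only [reindex_apply, submatrix_apply, Equiv.prodAssoc, Equiv.coe_fn_symm_mk,
    kroneckerMap_apply, Matrix.add_apply, pm, Matrix.of_apply, one_apply, sg, flip2,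
    Prod.mk.injEq, id_eq, add_mul, ite_mul, zero_mul, one_mul, mul_ite, mul_zero, mul_one]
  split_ifs <;> first | tauto | ring

lemma pm_kron (d e : Fin 3 × Fin 3 → ℝ) :
    (1 : Matrix (Fin 3) (Fin 3) ℝ) ⊗ₖ (pm id d + pm flip2 e) =
    pm id (fun x : Fin 3 × Fin 3 × Fin 3 => d x.2)
      + pm tg (fun x : Fin 3 × Fin 3 × Fin 3 => e x.2) := by
  ext ⟨x1, x2, x3⟩ ⟨y1, y2, y3⟩
  simp only [kroneckerMap_apply, Matrix.add_apply, pm, Matrix.of_apply, one_apply, tg, flip2,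
    Prod.mk.injEq, id_eq, mul_add, ite_mul, zero_mul, one_mul, mul_ite, mul_zero, mul_one]
  split_ifs <;> first | tauto | ring

set_option maxHeartbeats 4000000 in
/-- The matrix `H = (d/dθ)R̂(θ)|₀` of the `N = 3` braid matrix satisfies the
double-commutator equation `[[H₁₂,H₂₃],H₁₂] = [[H₂₃,H₁₂],H₂₃]`. -/
theorem Hmat_double_commutator (m11p m11m m12p m12m m21p m21m : ℝ) :
    let A := Hmat12 m11p m11m m12p m12m m21p m21m
    let B := Hmat23 m11p m11m m12p m12m m21p m21m
    (A * B - B * A) * A - A * (A * B - B * A) =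
    (B * A - A * B) * B - B * (B * A - A * B) := by
  intro A B
  have hA : A = pm id (fun x : Fin 3 × Fin 3 × Fin 3 =>
        ddH m11p m11m m12p m12m m21p m21m (x.1, x.2.1))
      + pm sg (fun x : Fin 3 × Fin 3 × Fin 3 =>
        eeH m11p m11m m12p m12m m21p m21m (x.1, x.2.1)) := by
    show Hmat12 m11p m11m m12p m12m m21p m21m = _
    rw [Hmat12, Hmat_pm, kron_pm]
  have hB : B = pm id (fun x : Fin 3 × Fin 3 × Fin 3 =>
        ddH m11p m11m m12p m12m m21p m21m x.2)
      + pm tg (fun x : Fin 3 × Fin 3 × Fin 3 =>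
        eeH m11p m11m m12p m12m m21p m21m x.2) := by
    show Hmat23 m11p m11m m12p m12m m21p m21m = _
    rw [Hmat23, Hmat_pm, pm_kron]
  rw [hA, hB]
  simp only [add_mul, mul_add, sub_mul, mul_sub, pm_mul, id_eq, sg_sg, tg_tg, tg_sg]
  ext ⟨x1, x2, x3⟩ y
  simp only [Matrix.sub_apply, Matrix.add_apply, pm, Matrix.of_apply, sg, tg, id_eq]
  fin_cases x1 <;> fin_cases x2 <;> fin_cases x3 <;>
    simp +decide [ddH, eeH, Prod.ext_iff] <;>
    split_ifs <;> ring
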